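/- A polynomial h(x) with symmetric coefficients of darga m that can be written as a sum over k from 0 to floor(m/2) of γ_k · x^k · (1+x)^{m-2k} with all γ_k ≥ 0 is symmetric and unimodal of darga m. -/

import Mathlib

open Polynomial

/-- `p` is symmetric of darga `m`: the coefficient of `q^k` equals the coefficient of
`q^(m-k)`, and no coefficients above degree `m`. -/
def IsSymmOfDarga (p : Polynomial ℝ) (m : ℕ) : Prop :=
  (∀ i j : ℕ, i + j = m → p.coeff i = p.coeff j) ∧ ∀ i : ℕ, m < i → p.coeff i = 0

/-- `p` is unimodal: coefficients weakly increase up to some index and then weakly decrease. -/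
def IsUnimodal (p : Polynomial ℝ) : Prop :=
  ∃ t : ℕ, (∀ i j : ℕ, i ≤ j → j ≤ t → p.coeff i ≤ p.coeff j) ∧
    (∀ i j : ℕ, t ≤ i → i ≤ j → p.coeff j ≤ p.coeff i)

private lemma choose_mono_left {n u : ℕ} (hu : u ≤ n / 2) : ∀ v ≤ u, n.choose v ≤ n.choose u := by
  induction u with
  | zero =>
    intro v hv
    obtain rfl : v = 0 := by omega
    exact le_refl _
  | succ t ih =>
    intro v hv
    rcases Nat.eq_or_lt_of_le hv with rfl | hlt
    · exact le_refl _
    · exact le_trans (ih (by omega) v (by omega))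
        (Nat.choose_le_succ_of_lt_half_left (by omega))

private lemma choose_mono_half {n r s : ℕ} (hrs : r ≤ s) (hs : 2 * s ≤ n + 1) :
    n.choose r ≤ n.choose s := by
  rcases Nat.lt_or_ge (2 * s) (n + 1) with hlt | hge
  · exact choose_mono_left (by omega) r hrs
  · have h2 : 2 * s = n + 1 := by omega
    have hsn : s ≤ n := by omega
    have hsym : n.choose s = n.choose (s - 1) := by
      have heq : n - s = s - 1 := by omega
      rw [← Nat.choose_symm hsn, heq]
    rw [hsym]
    rcases Nat.eq_or_lt_of_le hrs with rfl | hlt'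
    · rw [← hsym]
    · exact choose_mono_left (by omega) r (by omega)

/-- A γ-nonnegative polynomial `h = Σ_{k=0}^{⌊m/2⌋} γ_k x^k (1+x)^{m-2k}` with all `γ_k ≥ 0`
is symmetric and unimodal of darga `m`. -/
theorem gamma_nonneg_symm_unimodal (m : ℕ) (γ : ℕ → ℝ) (h : Polynomial ℝ)
    (hγ : ∀ k ≤ m / 2, 0 ≤ γ k)
    (hh : h = ∑ k ∈ Finset.range (m / 2 + 1),
        Polynomial.C (γ k) * Polynomial.X ^ k * (1 + Polynomial.X) ^ (m - 2 * k)) :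
    IsSymmOfDarga h m ∧ IsUnimodal h := by
  set f : ℕ → ℕ → ℝ := fun k i =>
    if k ≤ i then ((m - 2 * k).choose (i - k) : ℝ) else 0 with hf
  have hcoeff : ∀ i, h.coeff i = ∑ k ∈ Finset.range (m / 2 + 1), γ k * f k i := by
    intro i
    rw [hh, Polynomial.finset_sum_coeff]
    refine Finset.sum_congr rfl fun k _ => ?_
    have : Polynomial.C (γ k) * Polynomial.X ^ k * (1 + Polynomial.X) ^ (m - 2 * k)
        = (Polynomial.C (γ k) * (1 + Polynomial.X) ^ (m - 2 * k)) * Polynomial.X ^ k := by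
      ring
    rw [this, Polynomial.coeff_mul_X_pow']
    simp only [hf]
    by_cases hki : k ≤ i
    · simp [hki, Polynomial.coeff_C_mul, Polynomial.coeff_one_add_X_pow]
    · simp [hki]
  have hf_nonneg : ∀ k i, 0 ≤ f k i := by
    intro k i
    simp only [hf]
    split <;> positivity
  have hcoeff_nonneg : ∀ i, 0 ≤ h.coeff i := by
    intro i
    rw [hcoeff i]
    exact Finset.sum_nonneg fun k hk =>
      mul_nonneg (hγ k (by simpa using Nat.lt_succ_iff.mp (Finset.mem_range.mp hk)))
        (hf_nonneg k i)
  have hf_symm : ∀ k ≤ m / 2, ∀ i j : ℕ, i + j = m → f k i = f k j := by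
    intro k hk i j hij
    simp only [hf]
    by_cases hki : k ≤ i <;> by_cases hkj : k ≤ j
    · simp only [hki, hkj, if_pos]
      by_cases hle : i - k ≤ m - 2 * k
      · congr 1
        rw [← Nat.choose_symm hle]
        congr 1
        omega
      · rw [Nat.choose_eq_zero_of_lt (by omega), Nat.choose_eq_zero_of_lt (by omega)]
    · simp only [hki, hkj, if_pos, if_neg, not_false_iff]
      rw [Nat.choose_eq_zero_of_lt (by omega)]
      simp
    · simp only [hki, hkj, if_pos, if_neg, not_false_iff]
      rw [Nat.choose_eq_zero_of_lt (by omega)]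
      simp
    · simp [hki, hkj]
  have hf_zero : ∀ k ≤ m / 2, ∀ i, m < i → f k i = 0 := by
    intro k hk i hi
    simp only [hf, if_pos (by omega : k ≤ i)]
    rw [Nat.choose_eq_zero_of_lt (by omega)]
    simp
  have hf_mono : ∀ k ≤ m / 2, ∀ i j : ℕ, i ≤ j → 2 * j ≤ m + 1 → f k i ≤ f k j := by
    intro k hk i j hij hjm
    simp only [hf]
    by_cases hki : k ≤ i
    · simp only [hki, if_pos (le_trans hki hij)]
      exact_mod_cast choose_mono_half (by omega) (by omega)
    · simp only [hki, if_neg, not_false_iff]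
      split
      · positivity
      · exact le_refl 0
  have hsymm : ∀ i j : ℕ, i + j = m → h.coeff i = h.coeff j := by
    intro i j hij
    rw [hcoeff i, hcoeff j]
    refine Finset.sum_congr rfl fun k hk => ?_
    have hk' : k ≤ m / 2 := by simpa using Nat.lt_succ_iff.mp (Finset.mem_range.mp hk)
    rw [hf_symm k hk' i j hij]
  have hzero : ∀ i : ℕ, m < i → h.coeff i = 0 := by
    intro i hi
    rw [hcoeff i]
    refine Finset.sum_eq_zero fun k hk => ?_
    have hk' : k ≤ m / 2 := by simpa using Nat.lt_succ_iff.mp (Finset.mem_range.mp hk)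
    rw [hf_zero k hk' i hi, mul_zero]
  have hmono : ∀ i j : ℕ, i ≤ j → 2 * j ≤ m + 1 → h.coeff i ≤ h.coeff j := by
    intro i j hij hjm
    rw [hcoeff i, hcoeff j]
    refine Finset.sum_le_sum fun k hk => ?_
    have hk' : k ≤ m / 2 := by simpa using Nat.lt_succ_iff.mp (Finset.mem_range.mp hk)
    exact mul_le_mul_of_nonneg_left (hf_mono k hk' i j hij hjm) (hγ k hk')
  refine ⟨⟨hsymm, hzero⟩, m / 2, ?_, ?_⟩
  · intro i j hij hj
    exact hmono i j hij (by omega)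
  · intro i j hi hij
    by_cases hjm : j ≤ m
    · have him : i ≤ m := le_trans hij hjm
      rw [hsymm j (m - j) (by omega), hsymm i (m - i) (by omega)]
      exact hmono (m - j) (m - i) (by omega) (by omega)
    · rw [hzero j (by omega)]
      exact hcoeff_nonneg i
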